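/- Let G_n be the Generalized Tribonacci sequence with nonnegative integer parameters P, Q, R (not all zero, with P + Q + R ≥ 2) and let C_n(G) = circ(G_1, G_2, ..., G_n) be the n×n circulant matrix. Then the spectral norm of C_n(G) equals (G_{n+2} + (1 - P)·G_{n+1} + R·G_n - 1) / (P + Q + R - 1). -/

import Mathlib

set_option synthInstance.maxHeartbeats 1000000
set_option maxHeartbeats 1000000

open Finset

section norm_aux
open Matrix

lemma coe_sub_aux (n : ℕ) [NeZero n] (i j : Fin n) :
    (((j : ℤ) - (i : ℤ)) % (n : ℤ)).toNat = ((j - i : Fin n) : ℕ) := by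
  have hi : (i:ℕ) ≤ n := le_of_lt i.isLt
  have key : ((j:ℤ) - (i:ℤ)) % (n:ℤ) = ((((n - (i:ℕ)) + (j:ℕ)) % n : ℕ) : ℤ) := by
    push_cast [Nat.cast_sub hi]
    rw [show (n:ℤ) - (i:ℤ) + (j:ℤ) = ((j:ℤ) - (i:ℤ)) + (n:ℤ) * 1 by ring,
      Int.add_mul_emod_self_left]
  rw [key, Int.toNat_natCast, Fin.sub_def]

lemma sum_id_aux (P Q R : ℕ) (G : ℕ → ℕ) (hG0 : G 0 = 0) (hG1 : G 1 = 0) (hG2 : G 2 = 1)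
    (hrec : ∀ n, G (n + 3) = P * G (n + 2) + Q * G (n + 1) + R * G n) (m : ℕ) :
    ((P:ℝ) + Q + R - 1) * (∑ k ∈ Finset.range m, (G (1 + k) : ℝ)) =
      (G (m + 2) : ℝ) + (1 - (P:ℝ)) * G (m + 1) + R * G m - 1 := by
  induction m with
  | zero => simp [hG0, hG1, hG2]
  | succ m ih =>
    rw [Finset.sum_range_succ, mul_add, ih, show m + 1 + 2 = m + 3 from rfl, hrec m]
    push_cast
    ring

lemma circ_norm_aux (n : ℕ) [NeZero n] (g : Fin n → ℕ)
    (C : Matrix (Fin n) (Fin n) ℂ) (hC : ∀ i j, C i j = (g (j - i) : ℂ)) :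
    ‖Matrix.toEuclideanCLM (𝕜 := ℂ) C‖ = ∑ k, (g k : ℝ) := by
  set Pm : Fin n → Matrix (Fin n) (Fin n) ℂ :=
    fun k => Matrix.of (fun i j => if j - i = k then (1:ℂ) else 0) with hPm
  have happly : ∀ (k : Fin n) (x : EuclideanSpace ℂ (Fin n)) (i : Fin n),
      (Matrix.toEuclideanCLM (𝕜 := ℂ) (Pm k) x) i = x (k + i) := by
    intro k x i
    show (Pm k *ᵥ (fun j => x j)) i = x (k + i)
    have hcond : ∀ j : Fin n, (j - i = k) = (j = k + i) := by
      intro j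
      simp [sub_eq_iff_eq_add, add_comm]
    simp only [Matrix.mulVec, dotProduct, hPm, Matrix.of_apply, ite_mul, one_mul, zero_mul]
    simp [hcond]
  have hPnorm : ∀ k : Fin n, ‖Matrix.toEuclideanCLM (𝕜 := ℂ) (Pm k)‖ ≤ 1 := by
    intro k
    apply ContinuousLinearMap.opNorm_le_bound _ zero_le_one
    intro x
    rw [one_mul]
    apply le_of_eq
    rw [EuclideanSpace.norm_eq, EuclideanSpace.norm_eq]
    congr 1
    rw [← Equiv.sum_comp (Equiv.addLeft k) (fun i => ‖x i‖ ^ 2)]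
    exact Finset.sum_congr rfl fun i _ => by rw [happly k x i]; rfl
  have hdec : C = ∑ k, (g k : ℂ) • Pm k := by
    ext i j
    rw [hC]
    simp [Matrix.sum_apply, hPm, mul_ite, Finset.sum_ite_eq]
  have hupper : ‖Matrix.toEuclideanCLM (𝕜 := ℂ) C‖ ≤ ∑ k, (g k : ℝ) := by
    rw [hdec, map_sum]
    refine le_trans (norm_sum_le _ _) (Finset.sum_le_sum fun k _ => ?_)
    rw [_root_.map_smul]
    refine le_trans (ContinuousLinearMap.opNorm_smul_le _ _) ?_
    rw [Complex.norm_natCast]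
    calc (g k : ℝ) * ‖Matrix.toEuclideanCLM (𝕜 := ℂ) (Pm k)‖
        ≤ (g k : ℝ) * 1 := mul_le_mul_of_nonneg_left (hPnorm k) (Nat.cast_nonneg _)
      _ = (g k : ℝ) := mul_one _
  set x : EuclideanSpace ℂ (Fin n) := (WithLp.equiv 2 _).symm (fun _ => (1:ℂ)) with hx
  have hxnorm : ‖x‖ = Real.sqrt n := by
    simp [hx, EuclideanSpace.norm_eq]
  have hxpos : 0 < ‖x‖ := by
    rw [hxnorm]
    exact Real.sqrt_pos.mpr (by exact_mod_cast Nat.pos_of_ne_zero (NeZero.ne n))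
  have hTx : Matrix.toEuclideanCLM (𝕜 := ℂ) C x = ((∑ k, (g k : ℕ) : ℕ) : ℂ) • x := by
    ext i
    show (C *ᵥ (fun j => x j)) i = _
    have hone : ∀ j, x j = 1 := fun j => rfl
    simp only [Matrix.mulVec, dotProduct, hone, mul_one, hC]
    have e := Equiv.sum_comp (Equiv.subRight i) (fun k => ((g k : ℕ) : ℂ))
    simp only [Equiv.subRight_apply] at e
    rw [e]
    have h2 : (((∑ k, (g k : ℕ) : ℕ) : ℂ) • x) i = ((∑ k, (g k : ℕ) : ℕ) : ℂ) := by
      show _ * x i = _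
      rw [hone i, mul_one]
    rw [h2]
    push_cast
    rfl
  have hlower : ∑ k, (g k : ℝ) ≤ ‖Matrix.toEuclideanCLM (𝕜 := ℂ) C‖ := by
    have h := (Matrix.toEuclideanCLM (𝕜 := ℂ) C).le_opNorm x
    rw [hTx, norm_smul] at h
    have hnc : ‖((∑ k, (g k : ℕ) : ℕ) : ℂ)‖ = ∑ k, (g k : ℝ) := by
      rw [Complex.norm_natCast]
      push_cast
      rfl
    rw [hnc] at h
    exact le_of_mul_le_mul_right h hxpos
  linarith

end norm_aux

theorem spectral_norm_circulant_generalized_tribonacci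
    (P Q R : ℕ) (hPQR : ¬(P = 0 ∧ Q = 0 ∧ R = 0)) (hge : 2 ≤ P + Q + R)
    (G : ℕ → ℕ) (hG0 : G 0 = 0) (hG1 : G 1 = 0) (hG2 : G 2 = 1)
    (hrec : ∀ n, G (n + 3) = P * G (n + 2) + Q * G (n + 1) + R * G n)
    (n : ℕ) (hn : 0 < n)
    (C : Matrix (Fin n) (Fin n) ℂ)
    (hC : ∀ i j : Fin n, C i j = (G (1 + (((j : ℤ) - (i : ℤ)) % (n : ℤ)).toNat) : ℂ)) :
    ‖Matrix.toEuclideanCLM (𝕜 := ℂ) C‖ =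
      ((G (n + 2) : ℝ) + (1 - (P : ℝ)) * G (n + 1) + R * G n - 1) / ((P : ℝ) + Q + R - 1) := by
  haveI : NeZero n := ⟨hn.ne'⟩
  have hC' : ∀ i j : Fin n, C i j = ((fun k : Fin n => G (1 + (k : ℕ))) (j - i) : ℂ) := by
    intro i j
    rw [hC, coe_sub_aux]
  rw [circ_norm_aux n (fun k : Fin n => G (1 + (k : ℕ))) C hC']
  have hsum : (∑ k : Fin n, ((fun k : Fin n => G (1 + (k : ℕ))) k : ℝ)) =
      ∑ k ∈ Finset.range n, (G (1 + k) : ℝ) := by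
    exact Fin.sum_univ_eq_sum_range (fun k => (G (1 + k) : ℝ)) n
  rw [hsum]
  have hd : (0:ℝ) < (P:ℝ) + Q + R - 1 := by
    have : (2:ℝ) ≤ (P:ℝ) + Q + R := by exact_mod_cast hge
    linarith
  rw [eq_div_iff hd.ne', ← sum_id_aux P Q R G hG0 hG1 hG2 hrec n]
  ring
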